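/- Let $k\ge 4$, $m\ge 1$, and let $\omega\colon B_k\to S_{mk}$ be a transitive homomorphism such that $\mathrm{supp}(\widehat\sigma_i)\cap\mathrm{supp}(\widehat\sigma_j)=\emptyset$ whenever $|i-j|>1$. Then $|\mathrm{supp}(\widehat\sigma_1)| = 2m$ and $|\mathrm{supp}(\widehat\sigma_1)\cap\mathrm{supp}(\widehat\sigma_2)| = m$. -/

import Mathlib

section aux
variable {G : Type*} [Group G]

lemma conj_pair' (a b : G) (h1 : a*b*a = b*a*b) : (a*b) * a * (a*b)⁻¹ = b := by
  have e : (a*b) * a = b * (a*b) := by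
    calc a*b*a = b*a*b := h1
    _ = b*(a*b) := by group
  rw [e, mul_inv_cancel_right]

lemma conj_t1' (a b c : G) (h1 : a*b*a = b*a*b) (h3 : a*c = c*a) :
    (a*b*c) * a * (a*b*c)⁻¹ = b := by
  have e : (a*b*c) * a = b * (a*b*c) := by
    calc a*b*c*a = a*b*(c*a) := by group
    _ = a*b*(a*c) := by rw [← h3]
    _ = (a*b*a)*c := by group
    _ = (b*a*b)*c := by rw [h1]
    _ = b*(a*b*c) := by group
  rw [e, mul_inv_cancel_right]

lemma conj_t2' (a b c : G) (h2 : b*c*b = c*b*c) (h3 : a*c = c*a) :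
    (a*b*c) * b * (a*b*c)⁻¹ = c := by
  have e : (a*b*c) * b = c * (a*b*c) := by
    calc a*b*c*b = a*(b*c*b) := by group
    _ = a*(c*b*c) := by rw [h2]
    _ = (a*c)*(b*c) := by group
    _ = (c*a)*(b*c) := by rw [h3]
    _ = c*(a*b*c) := by group
  rw [e, mul_inv_cancel_right]

end aux

lemma half_supp' {α : Type*} [DecidableEq α] [Fintype α] (x y : Equiv.Perm α)
    (h : x*y*x = y*x*y) : x.support.card ≤ 2 * (x.support ∩ y.support).card := by
  have key : ∀ a ∈ x.support \ y.support, x a ∈ x.support ∩ y.support := by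
    intro a ha
    rw [Finset.mem_sdiff] at ha
    obtain ⟨hax, hay⟩ := ha
    have hya : y a = a := Equiv.Perm.notMem_support.mp hay
    rw [Finset.mem_inter]
    refine ⟨Equiv.Perm.apply_mem_support.mpr hax, ?_⟩
    by_contra hxy
    have hyxa : y (x a) = x a := Equiv.Perm.notMem_support.mp hxy
    have h2 : (x*y*x) a = (y*x*y) a := by rw [h]
    simp only [Equiv.Perm.mul_apply, hya, hyxa] at h2
    -- h2 : x (x a) = x a  (RHS : y (x (y a)) = y (x a) = x a)
    exact Equiv.Perm.mem_support.mp hax (x.injective h2)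
  have hinj : Set.InjOn x ↑(x.support \ y.support) := fun a _ b _ hab => x.injective hab
  have hle : (x.support \ y.support).card ≤ (x.support ∩ y.support).card :=
    Finset.card_le_card_of_injOn x key hinj
  have := Finset.card_sdiff_add_card_inter x.support y.support
  omega



/-- Let `k ≥ 4`, `m ≥ 1`, and let `ω : B_k → S_{mk}` be a transitive homomorphism
(encoded by the images `s i` of the generators satisfying the braid relations) such
that `supp(σ̂ᵢ) ∩ supp(σ̂ⱼ) = ∅` whenever `|i - j| > 1`.  Then `|supp(σ̂₁)| = 2m` and
`|supp(σ̂₁) ∩ supp(σ̂₂)| = m`. -/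
theorem good_type1_supp (k m : ℕ) (hk : 4 ≤ k) (hm : 1 ≤ m)
    (s : ℕ → Equiv.Perm (Fin (m * k)))
    (hbraid : ∀ i, 1 ≤ i → i + 1 ≤ k - 1 →
      s i * s (i + 1) * s i = s (i + 1) * s i * s (i + 1))
    (hcomm : ∀ i j, 1 ≤ i → j ≤ k - 1 → i + 2 ≤ j → s i * s j = s j * s i)
    (htrans : ∀ x y : Fin (m * k),
      ∃ g ∈ Subgroup.closure {g : Equiv.Perm (Fin (m * k)) | ∃ i, 1 ≤ i ∧ i ≤ k - 1 ∧ g = s i},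
        g x = y)
    (hdisj : ∀ i j, 1 ≤ i → i ≤ k - 1 → 1 ≤ j → j ≤ k - 1 → (i + 1 < j ∨ j + 1 < i) →
      (s i).support ∩ (s j).support = ∅) :
    (s 1).support.card = 2 * m ∧ ((s 1).support ∩ (s 2).support).card = m := by
  set c := (s 1).support.card with hcdef
  set t := ((s 1).support ∩ (s 2).support).card with htdef
  -- support cards are constant
  have hc : ∀ i, 1 ≤ i → i ≤ k - 1 → (s i).support.card = c := by
    intro i hi1
    induction i, hi1 using Nat.le_induction with
    | base => intro _; rfl
    | succ n hn ih =>
      intro hnk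
      have hb := hbraid n hn hnk
      have hconj := conj_pair' (s n) (s (n+1)) hb
      calc (s (n+1)).support.card
          = ((s n * s (n+1)) * s n * (s n * s (n+1))⁻¹).support.card := by rw [hconj]
        _ = (s n).support.card := Equiv.Perm.card_support_conj
        _ = c := ih (by omega)
  -- consecutive intersection cards transport
  have htstep : ∀ i, 1 ≤ i → i + 2 ≤ k - 1 →
      ((s (i+1)).support ∩ (s (i+2)).support).card
        = ((s i).support ∩ (s (i+1)).support).card := by
    intro i hi hik
    have hb1 := hbraid i hi (by omega)
    have hb2 := hbraid (i+1) (by omega) (by omega)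
    have hc13 := hcomm i (i+2) hi hik (by omega)
    set g := s i * s (i+1) * s (i+2) with hg
    have e1 : g * s i * g⁻¹ = s (i+1) := conj_t1' _ _ _ hb1 hc13
    have e2 : g * s (i+1) * g⁻¹ = s (i+2) := conj_t2' _ _ _ (by exact_mod_cast hb2) hc13
    have s1' : (s (i+1)).support = (s i).support.map g.toEmbedding := by
      rw [← e1, Equiv.Perm.support_conj]
    have s2' : (s (i+2)).support = (s (i+1)).support.map g.toEmbedding := by
      rw [← e2, Equiv.Perm.support_conj]
    have himg : ((s i).support ∩ (s (i+1)).support).map g.toEmbedding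
        = (s (i+1)).support ∩ (s (i+2)).support := by
      rw [Finset.map_inter, ← s1', ← s2']
    rw [← himg, Finset.card_map]
  have ht : ∀ i, 1 ≤ i → i + 1 ≤ k - 1 →
      ((s i).support ∩ (s (i+1)).support).card = t := by
    intro i hi1
    induction i, hi1 using Nat.le_induction with
    | base => intro _; rfl
    | succ n hn ih =>
      intro hnk
      have := htstep n hn (by omega)
      rw [show n + 1 + 1 = n + 2 from rfl, this]
      exact ih (by omega)
  -- the union of supports
  set U : ℕ → Finset (Fin (m * k)) :=
    fun n => (Finset.Icc 1 n).biUnion (fun i => (s i).support) with hUdef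
  have hU : ∀ n, 1 ≤ n → n ≤ k - 1 → (U n).card + (n - 1) * t = n * c := by
    intro n hn1
    induction n, hn1 using Nat.le_induction with
    | base =>
      intro _
      simp only [hUdef, Finset.Icc_self, Finset.singleton_biUnion]
      omega
    | succ n hn ih =>
      intro hnk
      have ihh := ih (by omega)
      have hins : Finset.Icc 1 (n+1) = insert (n+1) (Finset.Icc 1 n) :=
        (Finset.insert_Icc_right_eq_Icc_add_one (by omega)).symm
      have hUsucc : U (n+1) = (s (n+1)).support ∪ U n := by
        rw [hUdef]; simp only [hins, Finset.biUnion_insert]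
      have hinter : (s (n+1)).support ∩ U n = (s n).support ∩ (s (n+1)).support := by
        ext x
        simp only [hUdef, Finset.mem_inter, Finset.mem_biUnion, Finset.mem_Icc]
        constructor
        · rintro ⟨hx1, j, ⟨hj1, hjn⟩, hxj⟩
          rcases eq_or_lt_of_le hjn with rfl | hjlt
          · exact ⟨hxj, hx1⟩
          · exfalso
            have hd := hdisj j (n+1) hj1 (by omega) (by omega) (by omega)
              (Or.inl (by omega))
            have hxm : x ∈ (s j).support ∩ (s (n+1)).support :=
              Finset.mem_inter.mpr ⟨hxj, hx1⟩
            rw [hd] at hxm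
            exact Finset.notMem_empty x hxm
        · rintro ⟨hxn, hx1⟩
          exact ⟨hx1, n, ⟨hn, le_refl n⟩, hxn⟩
      have hcu := Finset.card_union_add_card_inter (s (n+1)).support (U n)
      rw [hinter, ht n hn (by omega), hc (n+1) (by omega) hnk] at hcu
      rw [hUsucc]
      obtain ⟨p, rfl⟩ : ∃ p, n = p + 1 := ⟨n - 1, by omega⟩
      have e1 : (p + 1 + 1 - 1) * t = (p + 1 - 1) * t + t := by
        simp only [Nat.add_sub_cancel]; ring
      have e2 : (p + 1 + 1) * c = (p + 1) * c + c := by ring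
      omega
  -- the union is everything
  have hUuniv : U (k-1) = Finset.univ := by
    rw [Finset.eq_univ_iff_forall]
    intro x
    by_contra hx
    have hfix : ∀ i, 1 ≤ i → i ≤ k - 1 → s i x = x := by
      intro i h1 h2
      by_contra hne
      exact hx (Finset.mem_biUnion.mpr
        ⟨i, Finset.mem_Icc.mpr ⟨h1, h2⟩, Equiv.Perm.mem_support.mpr hne⟩)
    have hcard : 1 < Fintype.card (Fin (m * k)) := by
      rw [Fintype.card_fin]; nlinarith
    obtain ⟨y, hy⟩ := Fintype.exists_ne_of_one_lt_card hcard x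
    obtain ⟨g, hg, hgx⟩ := htrans x y
    have hgfix : g x = x := by
      refine Subgroup.closure_induction ?_ rfl ?_ ?_ hg
      · rintro z ⟨i, hi1, hik, rfl⟩
        exact hfix i hi1 hik
      · intro a b _ _ ha hb
        simp only [Equiv.Perm.mul_apply, hb, ha]
      · intro a _ ha
        have h2 : a⁻¹ (a x) = x := a.symm_apply_apply x
        rwa [ha] at h2
    exact hy (hgx.symm.trans hgfix)
  have hcardU : (U (k-1)).card = m * k := by
    rw [hUuniv, Finset.card_univ, Fintype.card_fin]
  have hmain := hU (k-1) (by omega) le_rfl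
  rw [hcardU] at hmain
  -- c ≤ 2t
  have hle1 : c ≤ 2 * t := half_supp' (s 1) (s 2) (hbraid 1 le_rfl (by omega))
  -- 2t ≤ c
  have h23 : ((s 2).support ∩ (s 3).support).card = t := ht 2 (by omega) (by omega)
  have hdisj13 : Disjoint ((s 1).support ∩ (s 2).support)
      ((s 2).support ∩ (s 3).support) := by
    have h0 := hdisj 1 3 (by omega) (by omega) (by omega) (by omega) (Or.inl (by omega))
    rw [Finset.disjoint_left]
    intro x hx1 hx2
    have hxm : x ∈ (s 1).support ∩ (s 3).support :=
      Finset.mem_inter.mpr ⟨(Finset.mem_inter.mp hx1).1, (Finset.mem_inter.mp hx2).2⟩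
    rw [h0] at hxm
    exact Finset.notMem_empty x hxm
  have hsub : ((s 1).support ∩ (s 2).support) ∪ ((s 2).support ∩ (s 3).support)
      ⊆ (s 2).support := by
    intro x hx
    rcases Finset.mem_union.mp hx with h | h
    · exact (Finset.mem_inter.mp h).2
    · exact (Finset.mem_inter.mp h).1
  have hle2 : 2 * t ≤ c := by
    have hcc := Finset.card_le_card hsub
    rw [Finset.card_union_of_disjoint hdisj13, h23, hc 2 (by omega) (by omega)] at hcc
    omega
  have hceq : c = 2 * t := le_antisymm hle1 hle2
  -- final arithmetic
  obtain ⟨q, rfl⟩ : ∃ q, k = q + 4 := ⟨k - 4, by omega⟩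
  have e1 : q + 4 - 1 = q + 3 := by omega
  have e2 : q + 4 - 1 - 1 = q + 2 := by omega
  rw [e1] at hmain
  rw [show q + 3 - 1 = q + 2 from by omega, hceq] at hmain
  -- hmain : m * (q+4) + (q+2) * t = (q+3) * (2*t)
  have htm : t = m := by nlinarith [hmain]
  omega
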